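/- (Theorem 3.3, identifiability of the causal structure, graph-theoretic form.) Let G and G' be two DAGs on the same vertex set consisting of d state nodes s^1_t, …, s^d_t at time t, one action node a_t, and d state nodes s^1_{t+1}, …, s^d_{t+1} at time t+1, in which every edge goes from a node in {s^1_t, …, s^d_t, a_t} to a node in {s^1_{t+1}, …, s^d_{t+1}} (no edges within a timestep, no backward edges, and no edges into a_t). If G and G' induce exactly the same d-separation relations among the vertices, then G and G' have exactly the same edge set; in particular, the structural masks M_{s→s} (recording edges s^i_t → s^j_{t+1}) and M_{a→s} (recording edges a_t → s^j_{t+1}) are uniquely determined by the d-separation relations. -/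

import Mathlib

/-- Undirected adjacency underlying a directed graph `E`. -/
def Adj {V : Type*} (E : V → V → Prop) (a b : V) : Prop := E a b ∨ E b a

/-- A simple path between `u` and `v` in the underlying undirected graph of the
digraph `E`, recorded as the list of visited vertices (at least two, no repeats,
consecutive vertices joined by an edge in one direction or the other). -/
def IsPath {V : Type*} (E : V → V → Prop) (u v : V) (p : List V) : Prop :=
  List.Chain' (Adj E) p ∧ p.head? = some u ∧ p.getLast? = some v ∧
    p.Nodup ∧ 2 ≤ p.length

/-- The intermediate node `b`, whose neighbours on the path are `a` and `c`,
blocks the path with respect to the set `S`: either (i) `b ∈ S` and the edges of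
the path at `b` form a chain (`a → b → c` or `a ← b ← c`) or a fork
(`a ← b → c`), or (ii) the edges at `b` form a collider (`a → b ← c`) and
neither `b` nor any descendant of `b` lies in `S`. -/
def BlocksAt {V : Type*} (E : V → V → Prop) (S : Set V) (a b c : V) : Prop :=
  (b ∈ S ∧ ((E a b ∧ E b c) ∨ (E c b ∧ E b a) ∨ (E b a ∧ E b c))) ∨
  (E a b ∧ E c b ∧ ∀ w, Relation.ReflTransGen E b w → w ∉ S)

/-- A path (given as a list of vertices) is blocked by `S` if some intermediate
node of the path blocks it. -/
def Blocked {V : Type*} (E : V → V → Prop) (S : Set V) (p : List V) : Prop :=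
  ∃ (p₁ : List V) (a b c : V) (p₂ : List V),
    p = p₁ ++ a :: b :: c :: p₂ ∧ BlocksAt E S a b c

/-- `u` and `v` are d-separated by `S` iff every path between them is blocked by `S`. -/
def DSep {V : Type*} (E : V → V → Prop) (S : Set V) (u v : V) : Prop :=
  ∀ p : List V, IsPath E u v p → Blocked E S p

/-- A directed graph is a DAG: no directed cycles (hence in particular no self-loops). -/
def IsDAG {V : Type*} (E : V → V → Prop) : Prop :=
  ∀ v, ¬ Relation.TransGen E v v

/-- Nodes of the two-timestep causal graph of Theorem 3.3: `d` state nodes at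
time `t`, one action node `a_t`, and `d` state nodes at time `t+1`. -/
inductive TwoStepNode (d : ℕ) : Type
  | state0 : Fin d → TwoStepNode d
  | action : TwoStepNode d
  | state1 : Fin d → TwoStepNode d

/-- In a two-layer graph, d-separation by the empty set detects exactly the
direct edges out of a source node. -/
lemma dsep_empty_iff_not_edge {d : ℕ} (E : TwoStepNode d → TwoStepNode d → Prop)
    (hlayer : ∀ u v, E u v →
      ((∃ i, u = .state0 i) ∨ u = .action) ∧ (∃ j, v = .state1 j))
    (u v : TwoStepNode d) (hu : (∃ i, u = TwoStepNode.state0 i) ∨ u = TwoStepNode.action) :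
    DSep E (∅ : Set (TwoStepNode d)) u v ↔ ¬ E u v := by
  -- no edge can point into a source-layer node
  have not_into : ∀ a b : TwoStepNode d,
      ((∃ i, a = TwoStepNode.state0 i) ∨ a = TwoStepNode.action) → ¬ E b a := by
    intro a b ha h
    obtain ⟨_, j, hj⟩ := hlayer b a h
    rcases ha with ⟨i, hi⟩ | hi <;> subst hj <;> simp_all
  -- no edge can start at a target-layer node
  have not_from : ∀ (j : Fin d) (b : TwoStepNode d), ¬ E (.state1 j) b := by
    intro j b h
    obtain ⟨hs, _⟩ := hlayer _ _ h
    rcases hs with ⟨i, hi⟩ | hi <;> simp_all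
  constructor
  · intro hd h
    have huv : u ≠ v := by
      obtain ⟨hs, j, hj⟩ := hlayer _ _ h
      rcases hs with ⟨i, hi⟩ | hi <;> subst hj <;> subst hi <;> simp
    have hpath : IsPath E u v [u, v] := by
      refine ⟨?_, rfl, rfl, by simp [huv], by simp⟩
      simp [List.Chain', Adj, h]
    obtain ⟨p₁, a, b, c, p₂, heq, _⟩ := hd [u, v] hpath
    have := congrArg List.length heq
    simp at this
    omega
  · intro h p hp
    obtain ⟨hchain, hhead, hlast, hnodup, hlen⟩ := hp
    rcases p with _ | ⟨x, _ | ⟨y, _ | ⟨z, rest⟩⟩⟩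
    · simp at hlen
    · simp at hlen
    · have hx : u = x := by symm; simpa using hhead
      have hy : v = y := by symm; simpa [List.getLast?] using hlast
      subst hx; subst hy
      have hadj : Adj E u v := by simpa [List.Chain'] using hchain
      rcases hadj with h' | h'
      · exact absurd h' h
      · exact absurd h' (not_into u v hu)
    · have hx : u = x := by symm; simpa using hhead
      subst hx
      have hadj1 : Adj E u y := (List.isChain_cons_cons.mp hchain).1
      have hadj2 : Adj E y z := (List.isChain_cons_cons.mp (List.isChain_cons_cons.mp hchain).2).1
      have hEuy : E u y := by
        rcases hadj1 with h' | h'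
        · exact h'
        · exact absurd h' (not_into u y hu)
      obtain ⟨_, j, hj⟩ := hlayer _ _ hEuy
      have hEzy : E z y := by
        rcases hadj2 with h' | h'
        · subst hj; exact absurd h' (not_from j z)
        · exact h'
      exact ⟨[], u, y, z, rest, rfl, Or.inr ⟨hEuy, hEzy, fun w _ hw => hw⟩⟩

/-- Theorem 3.3 (identifiability of the causal structure, graph-theoretic form):
if two DAGs on the node set `{s^1_t, …, s^d_t, a_t, s^1_{t+1}, …, s^d_{t+1}}`,
in which every edge goes from a node in `{s^1_t, …, s^d_t, a_t}` to a node in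
`{s^1_{t+1}, …, s^d_{t+1}}`, induce exactly the same d-separation relations,
then they have exactly the same edge set; in particular the structural masks
`M_{s→s}` and `M_{a→s}` are uniquely determined by the d-separation relations. -/
theorem causal_structure_identifiable {d : ℕ}
    (E E' : TwoStepNode d → TwoStepNode d → Prop)
    (hdag : IsDAG E) (hdag' : IsDAG E')
    (hlayer : ∀ u v, E u v →
      ((∃ i, u = .state0 i) ∨ u = .action) ∧ (∃ j, v = .state1 j))
    (hlayer' : ∀ u v, E' u v →
      ((∃ i, u = .state0 i) ∨ u = .action) ∧ (∃ j, v = .state1 j))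
    (hsep : ∀ (S : Set (TwoStepNode d)) (u v : TwoStepNode d),
      u ∉ S → v ∉ S → (DSep E S u v ↔ DSep E' S u v)) :
    (∀ u v, E u v ↔ E' u v) ∧
      (∀ i j : Fin d, E (.state0 i) (.state1 j) ↔ E' (.state0 i) (.state1 j)) ∧
      (∀ j : Fin d, E .action (.state1 j) ↔ E' .action (.state1 j)) := by
  have main : ∀ u v, E u v ↔ E' u v := by
    intro u v
    constructor
    · intro h
      obtain ⟨hu, j, hj⟩ := hlayer _ _ h
      have hiff := hsep (∅ : Set (TwoStepNode d)) u v (by simp) (by simp)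
      have h1 := (dsep_empty_iff_not_edge E hlayer u v hu)
      have h2 := (dsep_empty_iff_not_edge E' hlayer' u v hu)
      by_contra h'
      exact absurd h ((h1.mp (hiff.mpr (h2.mpr h'))))
    · intro h
      obtain ⟨hu, j, hj⟩ := hlayer' _ _ h
      have hiff := hsep (∅ : Set (TwoStepNode d)) u v (by simp) (by simp)
      have h1 := (dsep_empty_iff_not_edge E hlayer u v hu)
      have h2 := (dsep_empty_iff_not_edge E' hlayer' u v hu)
      by_contra h'
      exact absurd h ((h2.mp (hiff.mp (h1.mpr h'))))
  exact ⟨main, fun i j => main _ _, fun j => main _ _⟩
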